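/- arXiv:1410.3076 — 2 statements merged into one kernel-verified Lean document; each statement's English description precedes it below -/
import Mathlib

section
/- Let n > 2s, z₀(x) = α(1+|x|²)^{-(n-2s)/2}, 0 < q < (n+2s)/(n−2s), γ_s := (n−2s)(q+1)/2, and let h : ℝⁿ → ℝ be continuous with compact support. Define Γ(μ,ξ) := μ^{-γ_s}/(q+1) · ∫_{ℝⁿ} h(x) z₀((x−ξ)/μ)^{q+1} dx for μ > 0. Then Γ(μ,ξ) → 0 as μ → 0, uniformly in ξ ∈ ℝⁿ. -/
set_option maxHeartbeats 1000000

open Real MeasureTheory Set Metric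

lemma aux_int0 (d : ℕ) (p : ℝ) (hp : 0 < p) (hpd : p < d) :
    IntegrableOn (fun x : EuclideanSpace ℝ (Fin d) => ‖x‖ ^ (-p))
      (Metric.closedBall 0 1) := by
  set E := EuclideanSpace ℝ (Fin d)
  have hfin : (Module.finrank ℝ E : ℝ) = d := by
    simp [E, finrank_euclideanSpace_fin]
  constructor
  · exact (measurable_norm.pow_const _).aestronglyMeasurable
  · have h_nn : ∀ x : E, 0 ≤ ‖x‖ ^ (-p) := fun x => rpow_nonneg (norm_nonneg x) _
    rw [HasFiniteIntegral]
    have heq : (∫⁻ a : E in Metric.closedBall 0 1, ‖‖a‖ ^ (-p)‖ₑ)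
        = ∫⁻ a : E in Metric.closedBall 0 1, ENNReal.ofReal (‖a‖ ^ (-p)) :=
      lintegral_enorm_of_nonneg fun x => h_nn x
    rw [heq, lintegral_eq_lintegral_meas_le _ (Filter.Eventually.of_forall h_nn)
      ((measurable_norm.pow_const _).aemeasurable)]
    set ν := volume.restrict (Metric.closedBall (0:E) 1)
    set f := fun t : ℝ => ν {a : E | t ≤ ‖a‖ ^ (-p)}
    set mB := volume (Metric.ball (0:E) 1)
    have hmB : mB ≠ ⊤ := measure_ball_lt_top.ne
    calc
      ∫⁻ t in Ioi 0, f t ≤ ∫⁻ t in Ioc 0 1 ∪ Ioi 1, f t :=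
        lintegral_mono_set Ioi_subset_Ioc_union_Ioi
      _ ≤ (∫⁻ t in Ioc 0 1, f t) + ∫⁻ t in Ioi 1, f t := lintegral_union_le _ _ _
      _ < ⊤ := ENNReal.add_lt_top.2 ⟨?_, ?_⟩
    · have hb : ∀ t ∈ Ioc (0:ℝ) 1, f t ≤ volume (Metric.closedBall (0:E) 1) := by
        intro t _
        exact le_trans (measure_mono (subset_univ _))
          (le_of_eq (Measure.restrict_apply_univ _))
      calc (∫⁻ t in Ioc 0 1, f t) ≤ ∫⁻ _ in Ioc (0:ℝ) 1, volume (Metric.closedBall (0:E) 1) :=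
            setLIntegral_mono' measurableSet_Ioc hb
        _ = volume (Metric.closedBall (0:E) 1) * volume (Ioc (0:ℝ) 1) := by
            rw [setLIntegral_const]
        _ < ⊤ := by
            refine ENNReal.mul_lt_top measure_closedBall_lt_top ?_
            simp [Real.volume_Ioc]
    · have hb : ∀ t ∈ Ioi (1:ℝ), f t ≤ ENNReal.ofReal (t ^ (-((d:ℝ)/p))) * mB := by
        intro t ht
        have ht1 : (1:ℝ) < t := ht
        have ht0 : (0:ℝ) < t := lt_trans one_pos ht1
        have hsub : {a : E | t ≤ ‖a‖ ^ (-p)} ⊆ Metric.closedBall 0 (t ^ (-p)⁻¹) := by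
          intro a ha
          have hna : 0 < ‖a‖ := by
            by_contra hcon
            push_neg at hcon
            have : ‖a‖ = 0 := le_antisymm hcon (norm_nonneg a)
            rw [mem_setOf_eq, this, Real.zero_rpow (neg_lt_zero.2 hp).ne] at ha
            linarith
          rw [mem_closedBall_zero_iff]
          exact (Real.le_rpow_inv_iff_of_neg hna ht0 (by linarith)).2 ha
        calc f t ≤ volume {a : E | t ≤ ‖a‖ ^ (-p)} := Measure.restrict_apply_le _ _
          _ ≤ volume (Metric.closedBall (0:E) (t ^ (-p)⁻¹)) := measure_mono hsub
          _ = ENNReal.ofReal ((t ^ (-p)⁻¹) ^ Module.finrank ℝ E) * mB :=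
              Measure.addHaar_closedBall _ _ (by positivity)
          _ = ENNReal.ofReal (t ^ (-((d:ℝ)/p))) * mB := by
              congr 1
              rw [← Real.rpow_natCast (t ^ (-p)⁻¹) (Module.finrank ℝ E), ← Real.rpow_mul ht0.le,
                hfin]
              congr 1
              field_simp
          
      calc (∫⁻ t in Ioi 1, f t) ≤ ∫⁻ t in Ioi (1:ℝ), ENNReal.ofReal (t ^ (-((d:ℝ)/p))) * mB :=
            setLIntegral_mono' measurableSet_Ioi hb
        _ = (∫⁻ t in Ioi (1:ℝ), ENNReal.ofReal (t ^ (-((d:ℝ)/p)))) * mB :=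
            lintegral_mul_const' _ _ hmB
        _ < ⊤ := by
            refine ENNReal.mul_lt_top ?_ measure_ball_lt_top
            refine IntegrableOn.setLIntegral_lt_top ?_
            refine integrableOn_Ioi_rpow_of_lt ?_ one_pos
            rw [neg_lt_neg_iff, lt_div_iff₀ hp, one_mul]
            exact hpd

/-- The reduced functional
`Γ(μ,ξ) = μ^{−γ_s}/(q+1) ∫ h(x) z₀((x−ξ)/μ)^{q+1} dx` tends to `0` as `μ → 0`,
uniformly in `ξ`. Here `γ_s = (n−2s)(q+1)/2` and `z₀(x) = α(1+|x|²)^{−(n−2s)/2}`. -/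
theorem stmt10 (d : ℕ) (s q α : ℝ) (hs : 0 < s) (hn : 2 * s < (d : ℝ))
    (hq : 0 < q) (hq' : q < ((d : ℝ) + 2 * s) / ((d : ℝ) - 2 * s)) (hα : 0 < α)
    (h : EuclideanSpace ℝ (Fin d) → ℝ) (hc : Continuous h) (hsupp : HasCompactSupport h) :
    ∀ ε > 0, ∃ μbar > 0, ∀ μ : ℝ, 0 < μ → μ < μbar → ∀ ξ : EuclideanSpace ℝ (Fin d),
      |μ ^ (-(((d : ℝ) - 2 * s) * (q + 1) / 2)) / (q + 1) *
        ∫ x, h x * (α * (1 + ‖μ⁻¹ • (x - ξ)‖ ^ 2) ^ (-((d : ℝ) - 2 * s) / 2)) ^ (q + 1)|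
        < ε := by
  have hds : (0:ℝ) < (d:ℝ) - 2 * s := by linarith
  have hd0 : (0:ℝ) < (d:ℝ) := by linarith
  have hdnat : 0 < d := by exact_mod_cast hd0
  have hq1 : (0:ℝ) < q + 1 := by linarith
  set β : ℝ := ((d:ℝ) - 2 * s) * (q + 1) / 2 with hβ
  have hβ0 : 0 < β := by positivity
  have hβd : β < d := by
    rw [hβ, div_lt_iff₀ (by norm_num : (0:ℝ) < 2)]
    have := (lt_div_iff₀ hds).1 hq'
    nlinarith
  set δ : ℝ := β * d / ((d:ℝ) + β) with hδ
  have hdβ0 : (0:ℝ) < (d:ℝ) + β := by linarith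
  have hδ0 : 0 < δ := by positivity
  have hδβ : δ ≤ β := by
    rw [hδ, div_le_iff₀ hdβ0]
    nlinarith
  have h2δβ : β < 2 * δ := by
    rw [hδ, mul_div_assoc', lt_div_iff₀ hdβ0]
    nlinarith
  have h2δd : 2 * δ < d := by
    rw [hδ, mul_div_assoc', div_lt_iff₀ hdβ0]
    nlinarith
  set e : ℝ := 2 * δ - β with he
  have he0 : 0 < e := by rw [he]; linarith
  obtain ⟨M₀, hM₀⟩ := hsupp.exists_bound_of_continuous hc
  set M : ℝ := max M₀ 0 with hM
  have hMnn : 0 ≤ M := le_max_right _ _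
  have hMb : ∀ x, |h x| ≤ M := fun x => by
    rw [← Real.norm_eq_abs]; exact le_trans (hM₀ x) (le_max_left _ _)
  set K : Set (EuclideanSpace ℝ (Fin d)) := tsupport h with hK
  have hKcomp : IsCompact K := hsupp
  have hKmeas : MeasurableSet K := (isClosed_tsupport h).measurableSet
  have hsing : IntegrableOn (fun x : EuclideanSpace ℝ (Fin d) => ‖x‖ ^ (-(2*δ))) (Metric.closedBall 0 1) :=
    aux_int0 d (2*δ) (by positivity) (by exact_mod_cast h2δd)
  set W : EuclideanSpace ℝ (Fin d) → ℝ := (Metric.closedBall (0:EuclideanSpace ℝ (Fin d)) 1).indicator (fun y => ‖y‖ ^ (-(2*δ))) with hW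
  have hWint : Integrable W := (integrable_indicator_iff measurableSet_closedBall).2 hsing
  have hWnn : ∀ y, 0 ≤ W y :=
    fun y => Set.indicator_nonneg (fun z _ => rpow_nonneg (norm_nonneg z) _) y
  set C₁ : ℝ := ∫ y, W y with hC₁
  have hC₁nn : 0 ≤ C₁ := integral_nonneg hWnn
  set V : ℝ := (volume K).toReal with hV
  have hVnn : 0 ≤ V := ENNReal.toReal_nonneg
  set A : ℝ := α ^ (q+1) * M * (V + C₁) / (q + 1) with hA
  have hAnn : 0 ≤ A := by positivity
  -- main uniform bound
  have key : ∀ μ : ℝ, 0 < μ → ∀ ξ : EuclideanSpace ℝ (Fin d),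
      |μ ^ (-β) / (q + 1) *
        ∫ x, h x * (α * (1 + ‖μ⁻¹ • (x - ξ)‖ ^ 2) ^ (-((d : ℝ) - 2 * s) / 2)) ^ (q + 1)|
        ≤ A * μ ^ e := by
    intro μ hμ ξ
    have hμβ : (0:ℝ) < μ ^ (-β) := rpow_pos_of_pos hμ _
    set c : ℝ := μ ^ (-β) / (q + 1) with hc'
    have hcpos : 0 < c := by positivity
    have hμ2δ : (0:ℝ) < μ ^ (2*δ) := rpow_pos_of_pos hμ _
    set CC : ℝ := α ^ (q+1) * μ ^ (2*δ) * M with hCC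
    have hCCnn : 0 ≤ CC := by positivity
    set g : EuclideanSpace ℝ (Fin d) → ℝ := fun x => CC * (K.indicator (fun _ => (1:ℝ)) x + W (x - ξ)) with hg
    have hKint : Integrable (K.indicator fun _ => (1:ℝ)) := by
      rw [integrable_indicator_iff hKmeas]
      exact integrableOn_const hKcomp.measure_lt_top.ne
    have hgint : Integrable g := (hKint.add (hWint.comp_sub_right ξ)).const_mul CC
    haveI : Nontrivial (EuclideanSpace ℝ (Fin d)) := by
      refine ⟨EuclideanSpace.single ⟨0, hdnat⟩ (1:ℝ), 0, ?_⟩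
      intro hcon
      have h2 := congrArg norm hcon
      simp [EuclideanSpace.norm_single] at h2
    have hsingle : volume ({ξ} : Set (EuclideanSpace ℝ (Fin d))) = 0 := measure_singleton ξ
    have hae : ∀ᵐ x : EuclideanSpace ℝ (Fin d), x ≠ ξ := by
      rw [ae_iff]
      convert hsingle using 2
      ext x
      simp
    have hbound : ∀ᵐ x : EuclideanSpace ℝ (Fin d),
        ‖h x * (α * (1 + ‖μ⁻¹ • (x - ξ)‖ ^ 2) ^ (-((d : ℝ) - 2 * s) / 2)) ^ (q + 1)‖ ≤ g x := by
      filter_upwards [hae] with x hx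
      set r : ℝ := ‖x - ξ‖ with hr
      have hr0 : 0 < r := by
        rw [hr, norm_pos_iff]
        exact sub_ne_zero.2 hx
      set T : ℝ := ‖μ⁻¹ • (x - ξ)‖ ^ 2 with hT
      have hTval : T = (μ⁻¹ * r) ^ 2 := by
        rw [hT, norm_smul, Real.norm_eq_abs, abs_of_pos (inv_pos.2 hμ)]
      have h1T : (0:ℝ) < 1 + T := by
        have hT0 : 0 ≤ T := by rw [hT]; positivity
        exact lt_add_of_lt_of_nonneg one_pos hT0
      have hP : (0:ℝ) < (1 + T) ^ (-((d : ℝ) - 2 * s) / 2) := rpow_pos_of_pos h1T _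
      have e1 : (α * (1 + T) ^ (-((d : ℝ) - 2 * s) / 2)) ^ (q + 1)
          = α ^ (q+1) * (1 + T) ^ (-β) := by
        rw [Real.mul_rpow hα.le hP.le, ← Real.rpow_mul h1T.le]
        congr 2
        rw [hβ]; ring
      have hrpos2 : (0:ℝ) < r ^ (2:ℕ) := by positivity
      have hμpos2 : (0:ℝ) < μ ^ (2:ℕ) := by positivity
      have hS0 : (0:ℝ) < μ ^ (2:ℕ) + r ^ (2:ℕ) := by positivity
      have hr2δ : (0:ℝ) ≤ r ^ (-(2*δ)) := rpow_nonneg hr0.le _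
      have e2 : (1 + T) ^ (-β) ≤ μ ^ (2*δ) * r ^ (-(2*δ)) := by
        have hTeq : 1 + T = (μ ^ (2:ℕ) + r ^ (2:ℕ)) / μ ^ (2:ℕ) := by
          rw [hTval]
          field_simp
        rw [hTeq, Real.div_rpow hS0.le hμpos2.le,
          div_le_iff₀ (rpow_pos_of_pos hμpos2 _)]
        have stepA : (μ ^ (2:ℕ) : ℝ) ^ (δ - β) = μ ^ (2*δ) * (μ ^ (2:ℕ) : ℝ) ^ (-β) := by
          rw [← Real.rpow_natCast μ 2, ← Real.rpow_mul hμ.le, ← Real.rpow_mul hμ.le,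
            ← Real.rpow_add hμ]
          congr 1
          push_cast
          ring
        have stepB : (r ^ (2:ℕ) : ℝ) ^ (-δ) = r ^ (-(2*δ)) := by
          rw [← Real.rpow_natCast r 2, ← Real.rpow_mul hr0.le]
          congr 1
          push_cast
          ring
        calc (μ ^ (2:ℕ) + r ^ (2:ℕ) : ℝ) ^ (-β)
            = (μ ^ (2:ℕ) + r ^ (2:ℕ) : ℝ) ^ (δ - β) * (μ ^ (2:ℕ) + r ^ (2:ℕ) : ℝ) ^ (-δ) := by
              rw [← Real.rpow_add hS0]
              congr 1
              ring
          _ ≤ (μ ^ (2:ℕ) : ℝ) ^ (δ - β) * (r ^ (2:ℕ) : ℝ) ^ (-δ) := by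
              apply mul_le_mul
              · exact Real.rpow_le_rpow_of_nonpos hμpos2 (le_add_of_nonneg_right hrpos2.le)
                  (sub_nonpos.2 hδβ)
              · exact Real.rpow_le_rpow_of_nonpos hrpos2 (le_add_of_nonneg_left hμpos2.le)
                  (neg_nonpos.2 hδ0.le)
              · exact rpow_nonneg hS0.le _
              · exact rpow_nonneg hμpos2.le _
          _ = μ ^ (2*δ) * r ^ (-(2*δ)) * (μ ^ (2:ℕ) : ℝ) ^ (-β) := by
              rw [stepA, stepB]
              ring
      -- put things together pointwise
      have habs : ‖h x * (α * (1 + T) ^ (-((d : ℝ) - 2 * s) / 2)) ^ (q + 1)‖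
          = |h x| * (α * (1 + T) ^ (-((d : ℝ) - 2 * s) / 2)) ^ (q + 1) := by
        rw [Real.norm_eq_abs, abs_mul, abs_of_nonneg (rpow_nonneg (by positivity) _)]
      rw [habs, e1]
      have hchain : |h x| * (α ^ (q+1) * (1 + T) ^ (-β))
          ≤ |h x| * (α ^ (q+1) * (μ ^ (2*δ) * r ^ (-(2*δ)))) := by
        apply mul_le_mul_of_nonneg_left _ (abs_nonneg _)
        apply mul_le_mul_of_nonneg_left e2 (by positivity)
      refine le_trans hchain ?_
      simp only [hg]
      by_cases hhx : h x = 0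
      · simp only [hhx, abs_zero, zero_mul]
        have : 0 ≤ K.indicator (fun _ => (1:ℝ)) x + W (x - ξ) :=
          add_nonneg (Set.indicator_nonneg (fun _ _ => zero_le_one) x) (hWnn _)
        positivity
      · have hxK : x ∈ K := subset_tsupport h hhx
        rw [Set.indicator_of_mem hxK]
        by_cases hr1 : r ≤ 1
        · have hmem : x - ξ ∈ Metric.closedBall (0:EuclideanSpace ℝ (Fin d)) 1 := by
            rw [mem_closedBall_zero_iff]
            exact hr1
          have hWeq : W (x - ξ) = r ^ (-(2*δ)) := by
            rw [hW, Set.indicator_of_mem hmem]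
          rw [hWeq, hCC]
          calc |h x| * (α ^ (q+1) * (μ ^ (2*δ) * r ^ (-(2*δ))))
              ≤ M * (α ^ (q+1) * (μ ^ (2*δ) * r ^ (-(2*δ)))) :=
                mul_le_mul_of_nonneg_right (hMb x) (by positivity)
            _ = α ^ (q+1) * μ ^ (2*δ) * M * (r ^ (-(2*δ))) := by ring
            _ ≤ α ^ (q+1) * μ ^ (2*δ) * M * (1 + r ^ (-(2*δ))) :=
                mul_le_mul_of_nonneg_left (le_add_of_nonneg_left zero_le_one) (by positivity)
        · push_neg at hr1
          have hr2δ1 : r ^ (-(2*δ)) ≤ 1 :=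
            Real.rpow_le_one_of_one_le_of_nonpos hr1.le (neg_nonpos.2 (by positivity))
          rw [hCC]
          calc |h x| * (α ^ (q+1) * (μ ^ (2*δ) * r ^ (-(2*δ))))
              ≤ M * (α ^ (q+1) * (μ ^ (2*δ) * 1)) := by
                apply mul_le_mul (hMb x) _ (by positivity) hMnn
                apply mul_le_mul_of_nonneg_left _ (by positivity)
                exact mul_le_mul_of_nonneg_left hr2δ1 hμ2δ.le
            _ = α ^ (q+1) * μ ^ (2*δ) * M * 1 := by ring
            _ ≤ α ^ (q+1) * μ ^ (2*δ) * M * (1 + W (x - ξ)) :=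
                mul_le_mul_of_nonneg_left (le_add_of_nonneg_right (hWnn _)) (by positivity)
    -- integrate the bound
    have hle : |∫ x, h x * (α * (1 + ‖μ⁻¹ • (x - ξ)‖ ^ 2) ^ (-((d : ℝ) - 2 * s) / 2)) ^ (q + 1)|
        ≤ ∫ x, g x := by
      rw [← Real.norm_eq_abs]
      exact norm_integral_le_of_norm_le hgint hbound
    have hgval : ∫ x, g x = CC * (V + C₁) := by
      simp only [hg]
      rw [MeasureTheory.integral_const_mul]
      congr 1
      rw [integral_add hKint (hWint.comp_sub_right ξ)]
      congr 1
      · rw [integral_indicator_const (1:ℝ) hKmeas]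
        simp [hV, Measure.real]
      · rw [hC₁]
        exact integral_sub_right_eq_self W ξ
    calc |μ ^ (-β) / (q + 1) *
          ∫ x, h x * (α * (1 + ‖μ⁻¹ • (x - ξ)‖ ^ 2) ^ (-((d : ℝ) - 2 * s) / 2)) ^ (q + 1)|
        = c * |∫ x, h x * (α * (1 + ‖μ⁻¹ • (x - ξ)‖ ^ 2) ^ (-((d : ℝ) - 2 * s) / 2)) ^ (q + 1)| := by
          rw [abs_mul, abs_of_pos hcpos]
      _ ≤ c * (CC * (V + C₁)) := by
          apply mul_le_mul_of_nonneg_left _ hcpos.le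
          rw [← hgval]
          exact hle
      _ = (μ ^ (-β) * μ ^ (2*δ)) * (α ^ (q+1) * M * (V + C₁) / (q + 1)) := by
          rw [hc', hCC]
          ring
      _ = A * μ ^ e := by
          rw [← Real.rpow_add hμ, hA, he]
          rw [show -β + 2*δ = 2*δ - β by ring]
          ring
  -- conclude
  intro ε hε
  refine ⟨(ε / (A + 1)) ^ e⁻¹, by positivity, ?_⟩
  intro μ hμ0 hμbar ξ
  have hμe : μ ^ e < ε / (A + 1) := by
    have h1 : μ ^ e < ((ε / (A + 1)) ^ e⁻¹) ^ e :=
      Real.rpow_lt_rpow hμ0.le hμbar he0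
    have h2 : ((ε / (A + 1)) ^ e⁻¹) ^ e = ε / (A + 1) := by
      rw [← Real.rpow_mul (by positivity), inv_mul_cancel₀ he0.ne', Real.rpow_one]
    rwa [h2] at h1
  have hμepos : 0 < μ ^ e := rpow_pos_of_pos hμ0 _
  calc |μ ^ (-β) / (q + 1) *
        ∫ x, h x * (α * (1 + ‖μ⁻¹ • (x - ξ)‖ ^ 2) ^ (-((d : ℝ) - 2 * s) / 2)) ^ (q + 1)|
      ≤ A * μ ^ e := key μ hμ0 ξ
    _ ≤ (A + 1) * μ ^ e := mul_le_mul_of_nonneg_right (le_add_of_nonneg_right zero_le_one) hμepos.le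
    _ < (A + 1) * (ε / (A + 1)) := by
        apply mul_lt_mul_of_pos_left hμe
        positivity
    _ = ε := by field_simp
end

section
/- Let n > 2s, 0 < q ≤ 2s/(n−2s), h : ℝⁿ → ℝ continuous, compactly supported, nonnegative, and h(ξ₀) > 0 for some ξ₀. With Γ as above, lim_{μ→0} Γ(μ,ξ₀)/μ^{n−γ_s} = +∞. -/
open Real MeasureTheory Set Filter
open scoped ENNReal NNReal

lemma g_cont (d : ℕ) (p : ℝ) :
    Continuous (fun y : EuclideanSpace ℝ (Fin d) => (1 + ‖y‖ ^ 2 : ℝ) ^ (-p)) := by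
  apply Continuous.rpow_const (by continuity)
  intro y; left; positivity

lemma g_le_one (d : ℕ) {p : ℝ} (hp : 0 ≤ p) (y : EuclideanSpace ℝ (Fin d)) :
    (1 + ‖y‖ ^ 2 : ℝ) ^ (-p) ≤ 1 :=
  Real.rpow_le_one_of_one_le_of_nonpos (le_add_of_nonneg_right (by positivity)) (by linarith)

lemma g_intOn (d : ℕ) {p : ℝ} (hp : 0 ≤ p) (R : ℝ) :
    IntegrableOn (fun y : EuclideanSpace ℝ (Fin d) => (1 + ‖y‖ ^ 2 : ℝ) ^ (-p))
      (Metric.ball 0 R) := by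
  apply Measure.integrableOn_of_bounded (M := 1) measure_ball_lt_top.ne
    (g_cont d p).aestronglyMeasurable
  refine ae_of_all _ fun y => ?_
  rw [Real.norm_eq_abs, abs_of_nonneg (by positivity)]
  exact g_le_one d hp y

lemma ball_int_large (d : ℕ) (hd : 0 < d) {p : ℝ} (hp : 0 < p) (hpd : 2 * p ≤ (d : ℝ)) (M : ℝ) :
    ∃ R : ℝ, 0 < R ∧
      M ≤ ∫ y in Metric.ball (0 : EuclideanSpace ℝ (Fin d)) R, (1 + ‖y‖ ^ 2 : ℝ) ^ (-p) := by
  haveI : NeZero d := ⟨hd.ne'⟩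
  set E := EuclideanSpace ℝ (Fin d)
  set g : E → ℝ := fun y => (1 + ‖y‖ ^ 2 : ℝ) ^ (-p) with hg
  set mB := volume (Metric.ball (0 : E) 1) with hmB
  have hmB0 : mB ≠ 0 := (Metric.measure_ball_pos _ _ one_pos).ne'
  have hmBt : mB ≠ ⊤ := measure_ball_lt_top.ne
  have h2d : (1 : ℝ) < 2 ^ d := one_lt_pow₀ one_lt_two hd.ne'
  set c : ℝ := 2 ^ (-(3 * p)) * ((2 : ℝ) ^ d - 1) with hc_def
  have hc : 0 < c := mul_pos (Real.rpow_pos_of_pos two_pos _) (by linarith)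
  set A : ℕ → Set E := fun k => Metric.ball 0 (2 ^ (k + 1)) \ Metric.ball 0 (2 ^ k) with hA
  have hAmeas : ∀ k, MeasurableSet (A k) := fun k =>
    measurableSet_ball.diff measurableSet_ball
  have hball : ∀ m : ℕ, volume (Metric.ball (0 : E) ((2 : ℝ) ^ m))
      = ENNReal.ofReal (((2 : ℝ) ^ m) ^ d) * mB := by
    intro m
    rw [Measure.addHaar_ball _ _ (by positivity), finrank_euclideanSpace_fin]
  -- per-annulus lower bound
  have hann : ∀ k : ℕ, ENNReal.ofReal c * mB ≤ ∫⁻ y in A k, ENNReal.ofReal (g y) := by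
    intro k
    set L : ℝ := ((2 : ℝ) ^ (2 * k + 3)) ^ (-p) with hL
    have hLpos : 0 < L := Real.rpow_pos_of_pos (by positivity) _
    have hpt : ∀ y ∈ A k, ENNReal.ofReal L ≤ ENNReal.ofReal (g y) := by
      intro y hy
      apply ENNReal.ofReal_le_ofReal
      have hy1 : ‖y‖ < 2 ^ (k + 1) := by
        simpa using hy.1
      have hbase : (1 + ‖y‖ ^ 2 : ℝ) ≤ (2 : ℝ) ^ (2 * k + 3) := by
        have h1 : ‖y‖ ^ 2 ≤ ((2 : ℝ) ^ (k + 1)) ^ 2 := by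
          have := norm_nonneg y
          nlinarith
        have h2 : ((2 : ℝ) ^ (k + 1)) ^ 2 = (2 : ℝ) ^ (2 * k + 2) := by ring
        have h3 : (1 : ℝ) ≤ (2 : ℝ) ^ (2 * k + 2) := one_le_pow₀ one_le_two
        have h4 : (2 : ℝ) ^ (2 * k + 3) = 2 * (2 : ℝ) ^ (2 * k + 2) := by ring
        nlinarith
      exact Real.rpow_le_rpow_of_nonpos (by positivity) hbase (by linarith)
    calc ENNReal.ofReal c * mB
        ≤ ENNReal.ofReal L * volume (A k) := by
          have hμA : volume (A k) = ENNReal.ofReal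
              (((2 : ℝ) ^ (k + 1)) ^ d - ((2 : ℝ) ^ k) ^ d) * mB := by
            rw [hA]
            rw [measure_diff (Metric.ball_subset_ball (by
                  exact pow_le_pow_right₀ one_le_two (Nat.le_succ k)))
                measurableSet_ball.nullMeasurableSet measure_ball_lt_top.ne,
              hball, hball, ← ENNReal.sub_mul (fun _ _ => hmBt), ← ENNReal.ofReal_sub]
            positivity
          rw [hμA, ← mul_assoc, ← ENNReal.ofReal_mul hLpos.le]
          apply mul_le_mul_left
          apply ENNReal.ofReal_le_ofReal
          have hBS : ((2 : ℝ) ^ (k + 1)) ^ d - ((2 : ℝ) ^ k) ^ d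
              = (2 : ℝ) ^ (k * d) * ((2 : ℝ) ^ d - 1) := by
            rw [← pow_mul, ← pow_mul]
            rw [mul_sub, ← pow_add, mul_one]
            ring_nf
          rw [hBS, ← mul_assoc]
          have key : (2 : ℝ) ^ (-(3 * p)) ≤ L * (2 : ℝ) ^ (k * d) := by
            rw [hL, ← Real.rpow_natCast (2 : ℝ) (2 * k + 3), ← Real.rpow_mul (by norm_num),
              ← Real.rpow_natCast (2 : ℝ) (k * d), ← Real.rpow_add two_pos,
              Real.rpow_le_rpow_left_iff one_lt_two]
            push_cast
            have : (k : ℝ) * (2 * p) ≤ (k : ℝ) * d :=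
              mul_le_mul_of_nonneg_left hpd (Nat.cast_nonneg k)
            nlinarith
          exact mul_le_mul_of_nonneg_right key (by linarith)
      _ ≤ ∫⁻ y in A k, ENNReal.ofReal (g y) := by
          rw [← setLIntegral_const (A k) (ENNReal.ofReal L)]
          exact setLIntegral_mono' (hAmeas k) hpt
  -- sum over annuli
  have hsum : ∀ N : ℕ, (N : ℝ≥0∞) * (ENNReal.ofReal c * mB)
      ≤ ∫⁻ y in Metric.ball (0 : E) ((2 : ℝ) ^ N), ENNReal.ofReal (g y) := by
    intro N
    have hdisj : (↑(Finset.range N) : Set ℕ).PairwiseDisjoint A := by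
      have key : ∀ i j : ℕ, i < j → Disjoint (A i) (A j) := by
        intro i j hij
        have h1 : A i ⊆ Metric.ball 0 ((2 : ℝ) ^ j) :=
          diff_subset.trans (Metric.ball_subset_ball (pow_le_pow_right₀ one_le_two hij))
        exact (disjoint_sdiff_self_right.mono_left h1)
      intro i _ j _ hij
      rcases hij.lt_or_gt with h | h
      · exact key i j h
      · exact (key j i h).symm
    have hUsub : (⋃ k ∈ Finset.range N, A k) ⊆ Metric.ball (0 : E) ((2 : ℝ) ^ N) := by
      refine Set.iUnion₂_subset fun k hk => ?_
      refine diff_subset.trans (Metric.ball_subset_ball ?_)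
      exact pow_le_pow_right₀ one_le_two (Finset.mem_range.mp hk)
    calc (N : ℝ≥0∞) * (ENNReal.ofReal c * mB)
        = ∑ _k ∈ Finset.range N, ENNReal.ofReal c * mB := by
          rw [Finset.sum_const, Finset.card_range, nsmul_eq_mul]
      _ ≤ ∑ k ∈ Finset.range N, ∫⁻ y in A k, ENNReal.ofReal (g y) :=
          Finset.sum_le_sum fun k _ => hann k
      _ = ∫⁻ y in ⋃ k ∈ Finset.range N, A k, ENNReal.ofReal (g y) :=
          (lintegral_biUnion_finset hdisj (fun k _ => hAmeas k) _).symm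
      _ ≤ ∫⁻ y in Metric.ball (0 : E) ((2 : ℝ) ^ N), ENNReal.ofReal (g y) :=
          lintegral_mono_set hUsub
  -- choose N
  have hcmB : 0 < c * mB.toReal :=
    mul_pos hc (ENNReal.toReal_pos hmB0 hmBt)
  obtain ⟨N, hN⟩ := exists_nat_ge (M / (c * mB.toReal))
  refine ⟨(2 : ℝ) ^ N, by positivity, ?_⟩
  have hMN : M ≤ (N : ℝ) * (c * mB.toReal) := by
    rw [div_le_iff₀ hcmB] at hN
    linarith
  have hint := g_intOn d hp.le ((2 : ℝ) ^ N)
  have hOfReal : ENNReal.ofReal (∫ y in Metric.ball (0 : E) ((2 : ℝ) ^ N), g y)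
      = ∫⁻ y in Metric.ball (0 : E) ((2 : ℝ) ^ N), ENNReal.ofReal (g y) :=
    MeasureTheory.ofReal_integral_eq_lintegral_ofReal hint
      (ae_of_all _ fun y => Real.rpow_nonneg (by positivity) _)
  have h1 : ((N : ℝ≥0∞) * (ENNReal.ofReal c * mB)).toReal
      ≤ (ENNReal.ofReal (∫ y in Metric.ball (0 : E) ((2 : ℝ) ^ N), g y)).toReal := by
    apply ENNReal.toReal_mono ENNReal.ofReal_ne_top
    rw [hOfReal]; exact hsum N
  rw [ENNReal.toReal_mul, ENNReal.toReal_mul, ENNReal.toReal_natCast,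
    ENNReal.toReal_ofReal hc.le,
    ENNReal.toReal_ofReal (setIntegral_nonneg measurableSet_ball
      fun y _ => Real.rpow_nonneg (by positivity) _)] at h1
  linarith

/-- If `0 < q ≤ 2s/(n−2s)`, `h ≥ 0` and `h(ξ₀) > 0`, then
`Γ(μ,ξ₀)/μ^{n−γ_s} → +∞` as `μ → 0⁺`. -/
theorem stmt14 (d : ℕ) (s q α : ℝ) (hs : 0 < s) (hn : 2 * s < (d : ℝ))
    (hq : 0 < q) (hq' : q ≤ 2 * s / ((d : ℝ) - 2 * s)) (hα : 0 < α)
    (h : EuclideanSpace ℝ (Fin d) → ℝ) (hc : Continuous h) (hsupp : HasCompactSupport h)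
    (hnonneg : ∀ x, 0 ≤ h x)
    (ξ₀ : EuclideanSpace ℝ (Fin d)) (hpos : 0 < h ξ₀) :
    Filter.Tendsto
      (fun μ : ℝ =>
        (μ ^ (-(((d : ℝ) - 2 * s) * (q + 1) / 2)) / (q + 1) *
          ∫ x, h x * (α * (1 + ‖μ⁻¹ • (x - ξ₀)‖ ^ 2) ^ (-((d : ℝ) - 2 * s) / 2)) ^ (q + 1)) /
          μ ^ ((d : ℝ) - ((d : ℝ) - 2 * s) * (q + 1) / 2))
      (nhdsWithin 0 (Set.Ioi 0)) Filter.atTop := by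
  have hn2s : 0 < (d : ℝ) - 2 * s := by linarith
  have hd : 0 < d := by
    have : (0 : ℝ) < d := lt_trans (by linarith) hn
    exact_mod_cast this
  have hq1 : 0 < q + 1 := by linarith
  set p : ℝ := ((d : ℝ) - 2 * s) * (q + 1) / 2 with hp_def
  have hp : 0 < p := div_pos (mul_pos hn2s hq1) two_pos
  have hpd : 2 * p ≤ (d : ℝ) := by
    have h1 : q * ((d : ℝ) - 2 * s) ≤ 2 * s := by
      rw [le_div_iff₀ hn2s] at hq'; exact hq'
    rw [hp_def]; nlinarith
  set g : EuclideanSpace ℝ (Fin d) → ℝ := fun y => (1 + ‖y‖ ^ 2 : ℝ) ^ (-p) with hgdef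
  set Φ : ℝ → EuclideanSpace ℝ (Fin d) → ℝ :=
    fun μ y => h (ξ₀ + μ • y) * (α ^ (q + 1) * g y) with hΦ
  have hGrw : ∀ y : EuclideanSpace ℝ (Fin d),
      (α * (1 + ‖y‖ ^ 2) ^ (-((d : ℝ) - 2 * s) / 2)) ^ (q + 1) = α ^ (q + 1) * g y := by
    intro y
    rw [Real.mul_rpow hα.le (Real.rpow_nonneg (by positivity) _),
      ← Real.rpow_mul (by positivity)]
    simp only [hgdef]
    congr 1
    rw [hp_def]; ring
  have hΦcont : ∀ μ : ℝ, Continuous (Φ μ) := fun μ =>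
    (hc.comp (continuous_const.add (continuous_const_smul μ))).mul (continuous_const.mul (g_cont d p))
  have hΦsupp : ∀ μ : ℝ, μ ≠ 0 → HasCompactSupport (Φ μ) := by
    intro μ hμ
    have h1 : HasCompactSupport (fun y : EuclideanSpace ℝ (Fin d) => h (ξ₀ + μ • y)) :=
      hsupp.comp_homeomorph ((Homeomorph.smulOfNeZero μ hμ).trans (Homeomorph.addLeft ξ₀))
    exact h1.mul_right
  have hΦint : ∀ μ : ℝ, μ ≠ 0 → Integrable (Φ μ) := fun μ hμ =>
    (hΦcont μ).integrable_of_hasCompactSupport (hΦsupp μ hμ)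
  have hΦnn : ∀ μ : ℝ, ∀ y, 0 ≤ Φ μ y := fun μ y =>
    mul_nonneg (hnonneg _)
      (mul_nonneg (Real.rpow_nonneg hα.le _) (Real.rpow_nonneg (by positivity) _))
  have hCOV : ∀ μ : ℝ, 0 < μ →
      (∫ x, h x * (α * (1 + ‖μ⁻¹ • (x - ξ₀)‖ ^ 2) ^ (-((d : ℝ) - 2 * s) / 2)) ^ (q + 1))
        = μ ^ (d : ℕ) * ∫ y, Φ μ y := by
    intro μ hμ
    have h1 : ∀ x, h x * (α * (1 + ‖μ⁻¹ • (x - ξ₀)‖ ^ 2) ^ (-((d : ℝ) - 2 * s) / 2)) ^ (q + 1)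
        = Φ μ (μ⁻¹ • (x - ξ₀)) := by
      intro x
      rw [hGrw]
      simp only [hΦ]
      rw [smul_inv_smul₀ hμ.ne']
      congr 2
      abel
    simp_rw [h1]
    have h2 : (∫ x, Φ μ (μ⁻¹ • (x - ξ₀)))
        = ∫ x, Φ μ (μ⁻¹ • x) :=
      integral_sub_right_eq_self (fun z => Φ μ (μ⁻¹ • z)) ξ₀
    rw [h2, Measure.integral_comp_smul volume (Φ μ) μ⁻¹, finrank_euclideanSpace_fin,
      inv_pow, inv_inv, abs_of_nonneg (by positivity), smul_eq_mul]
  rw [tendsto_atTop]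
  intro M
  set c0 : ℝ := h ξ₀ / 2 with hc0
  have hc0p : 0 < c0 := half_pos hpos
  obtain ⟨δ, hδ, hδh⟩ : ∃ δ > 0, ∀ z, dist z ξ₀ < δ → c0 ≤ h z := by
    obtain ⟨δ, hδ, H⟩ := Metric.continuousAt_iff.mp hc.continuousAt c0 hc0p
    refine ⟨δ, hδ, fun z hz => ?_⟩
    have h2 := H hz
    rw [Real.dist_eq] at h2
    have h3 := abs_lt.mp h2
    rw [hc0]; linarith [h3.1]
  set c1 : ℝ := c0 * α ^ (q + 1) with hc1
  have hc1p : 0 < c1 := mul_pos hc0p (Real.rpow_pos_of_pos hα _)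
  obtain ⟨R, hR, hRint⟩ := ball_int_large d hd hp hpd ((q + 1) * M / c1)
  have hδR : 0 < δ / R := div_pos hδ hR
  filter_upwards [Ioo_mem_nhdsGT_of_mem (Set.left_mem_Ico.mpr hδR)] with μ hμIoo
  obtain ⟨hμ0, hμδ⟩ := hμIoo
  rw [hCOV μ hμ0]
  set J := ∫ y, Φ μ y with hJdef
  have hJle : (q + 1) * M ≤ J := by
    calc (q + 1) * M = c1 * ((q + 1) * M / c1) := by field_simp
      _ ≤ c1 * ∫ y in Metric.ball 0 R, g y := by gcongr
      _ = ∫ y in Metric.ball 0 R, c1 * g y := (integral_const_mul _ _).symm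
      _ ≤ ∫ y in Metric.ball 0 R, Φ μ y := by
          apply setIntegral_mono_on ((g_intOn d hp.le R).const_mul c1)
            ((hΦint μ hμ0.ne').integrableOn) measurableSet_ball
          intro y hy
          have hyR : ‖y‖ < R := by simpa using hy
          have hdist : dist (ξ₀ + μ • y) ξ₀ < δ := by
            rw [dist_eq_norm, add_sub_cancel_left, norm_smul, Real.norm_eq_abs,
              abs_of_pos hμ0]
            have h4 : μ * ‖y‖ ≤ μ * R := by nlinarith
            have h5 : μ * R < δ := (lt_div_iff₀ hR).mp hμδ
            linarith
          have hh := hδh _ hdist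
          have h6 : c1 * g y = c0 * (α ^ (q + 1) * g y) := by rw [hc1]; ring
          rw [h6]
          exact mul_le_mul_of_nonneg_right hh
            (mul_nonneg (Real.rpow_nonneg hα.le _) (Real.rpow_nonneg (by positivity) _))
      _ ≤ J := setIntegral_le_integral (hΦint μ hμ0.ne') (ae_of_all _ (hΦnn μ))
  have e2 : μ ^ (-p) * μ ^ (d : ℕ) = μ ^ ((d : ℝ) - p) := by
    rw [← Real.rpow_natCast μ d, ← Real.rpow_add hμ0]
    ring_nf
  have e3 : μ ^ (-p) ≠ 0 := (Real.rpow_pos_of_pos hμ0 _).ne'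
  have e4 : (μ : ℝ) ^ (d : ℕ) ≠ 0 := pow_ne_zero _ hμ0.ne'
  have e5 : μ ^ (-p) / (q + 1) * (μ ^ (d : ℕ) * J) / μ ^ ((d : ℝ) - p) = J / (q + 1) := by
    rw [← e2]
    field_simp
  rw [e5, le_div_iff₀ hq1]
  linarith
end
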